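/- Fix s > 0, c > 1, and an angle θ with cos θ < 0 and c > −cos θ. Consider a ray for which f(t) satisfies df/dt = cos θ < 0 for t before the hit (linear planar case). Then the weight w(t) = T(t)·σ̂(t), where σ̂(t) = c·s·e^{-s f(t)}/(1+e^{-s f(t)}) and T(t) = exp(−∫₀ᵗ σ̂(u) du), attains its maximum at the parameter t* where f(t*) = (1/s)·ln(−c/cos θ), and this value is strictly positive. -/

import Mathlib

open Real

lemma amgm_key {k x : ℝ} (hk : 1 < k) (hx : 0 < x) :
    x / (1 + x) ^ (k + 1) ≤ (1 / k) / (1 + 1 / k) ^ (k + 1) := by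
  have hk0 : (0:ℝ) < k := by linarith
  have hk1 : (0:ℝ) < k + 1 := by linarith
  have hp1 : (0:ℝ) < (k + 1) / k := by positivity
  have hp2 : (0:ℝ) < (k + 1) * x := by positivity
  have hgm := Real.geom_mean_le_arith_mean2_weighted
    (by positivity : (0:ℝ) ≤ k / (k + 1)) (by positivity : (0:ℝ) ≤ 1 / (k + 1))
    hp1.le hp2.le (by field_simp)
  have hrhs : k / (k + 1) * ((k + 1) / k) + 1 / (k + 1) * ((k + 1) * x) = 1 + x := by
    field_simp
  rw [hrhs] at hgm
  have h2 := Real.rpow_le_rpow (by positivity) hgm hk1.le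
  rw [Real.mul_rpow (by positivity) (by positivity), ← Real.rpow_mul hp1.le,
    ← Real.rpow_mul hp2.le] at h2
  have e1 : k / (k + 1) * (k + 1) = k := by field_simp
  have e2 : 1 / (k + 1) * (k + 1) = 1 := by field_simp
  rw [e1, e2, Real.rpow_one] at h2
  have hq : (1 + 1 / k : ℝ) = (k + 1) / k := by field_simp
  rw [hq, Real.rpow_add hp1, Real.rpow_one,
    div_le_div_iff₀ (by positivity) (by positivity)]
  have h3 := mul_le_mul_of_nonneg_left h2 (by positivity : (0:ℝ) ≤ 1 / k)
  have e3 : 1 / k * (((k + 1) / k) ^ k * ((k + 1) * x))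
      = x * (((k + 1) / k) ^ k * ((k + 1) / k)) := by
    field_simp
  rw [e3] at h3
  linarith



/-- Bias of the modified density: with `f` linear, `f'(t) = cos θ < 0`, `c > 1`,
`c > -cos θ`, the weight `w = T·σ̂` with `σ̂(t) = c s e^{-s f(t)}/(1+e^{-s f(t)})` and
`T(t) = exp(-∫₀ᵗ σ̂)` attains its maximum over the segment before the hit at the
parameter `t*` with `f(t*) = (1/s)·ln(-c/cos θ)`, and this distance value is positive. -/
theorem stmt5 (s c θ : ℝ) (hs : 0 < s) (hc : 1 < c)
    (hcθ : Real.cos θ < 0) (hcc : -Real.cos θ < c)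
    (f : ℝ → ℝ) (hf : ∀ t, f t = f 0 + t * Real.cos θ) (hf0 : 0 < f 0)
    (σ T w : ℝ → ℝ)
    (hσ : ∀ t, σ t = c * s * Real.exp (-s * f t) / (1 + Real.exp (-s * f t)))
    (hT : ∀ t, T t = Real.exp (-(∫ u in (0:ℝ)..t, σ u)))
    (hw : ∀ t, w t = T t * σ t)
    (tstar : ℝ)
    (htstar : f tstar = (1 / s) * Real.log (-c / Real.cos θ))
    (hmem : tstar ∈ Set.Icc 0 (-(f 0) / Real.cos θ)) :
    0 < f tstar ∧
    ∀ t ∈ Set.Icc (0:ℝ) (-(f 0) / Real.cos θ), w t ≤ w tstar := by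
  set b := Real.cos θ with hb_def
  have hb : b < 0 := hcθ
  have hbne : b ≠ 0 := ne_of_lt hb
  set k : ℝ := -c / b with hk_def
  have hk1 : 1 < k := by
    have e : k = c / (-b) := by rw [hk_def, div_neg, neg_div]
    rw [e, lt_div_iff₀ (by linarith : (0:ℝ) < -b)]
    linarith
  have hk0 : (0:ℝ) < k := by linarith
  -- abbreviations
  set x : ℝ → ℝ := fun t => Real.exp (-s * f t) with hx_def
  have hxpos : ∀ t, 0 < x t := fun t => Real.exp_pos _
  have h1x : ∀ t, (0:ℝ) < 1 + x t := fun t => by linarith [hxpos t]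
  -- sigma formula via x
  have hσx : ∀ t, σ t = c * s * x t / (1 + x t) := fun t => hσ t
  -- continuity of σ
  have hσcont : Continuous σ := by
    have : σ = fun t => c * s * Real.exp (-s * f t) / (1 + Real.exp (-s * f t)) :=
      funext hσ
    rw [this]
    have hfc : Continuous f := by
      have : f = fun t => f 0 + t * b := funext hf
      rw [this]
      exact continuous_const.add (continuous_id.mul continuous_const)
    have he : Continuous fun t => Real.exp (-s * f t) :=
      Real.continuous_exp.comp (continuous_const.mul hfc)
    exact (continuous_const.mul he).div (continuous_const.add he)
      (fun t => ne_of_gt (by linarith [Real.exp_pos (-s * f t)]))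
  -- FTC: integral of σ
  have hderiv : ∀ u : ℝ, HasDerivAt (fun v => k * Real.log (1 + Real.exp (-s * (f 0 + v * b))))
      (σ u) u := by
    intro u
    have h1 : HasDerivAt (fun v : ℝ => -s * (f 0 + v * b)) (-s * b) u := by
      have := (((hasDerivAt_id u).mul_const b).const_add (f 0)).const_mul (-s)
      simpa using this
    have h2 := h1.exp
    have h3 := h2.const_add 1
    have h4 := h3.log (by positivity)
    have h5 := h4.const_mul k
    refine h5.congr_deriv ?_
    rw [hσ u, hf u]
    field_simp [hk_def]
    ring
    rw [hk_def, div_mul_cancel₀ _ hbne, neg_neg]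
  have hint : ∀ t, (∫ u in (0:ℝ)..t, σ u)
      = k * Real.log (1 + x t) - k * Real.log (1 + x 0) := by
    intro t
    have := intervalIntegral.integral_eq_sub_of_hasDerivAt
      (f := fun v => k * Real.log (1 + Real.exp (-s * (f 0 + v * b))))
      (fun u _ => hderiv u) (hσcont.intervalIntegrable 0 t)
    rw [this]
    have e0 : f 0 + (0:ℝ) * b = f 0 := by ring
    have et : f 0 + t * b = f t := (hf t).symm
    beta_reduce
    rw [e0, et]
  -- closed form for w
  set C : ℝ := c * s * (1 + x 0) ^ k with hC_def
  have hCpos : 0 < C := by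
    have := Real.rpow_pos_of_pos (h1x 0) k
    positivity
  have hW : ∀ t, w t = C * (x t / (1 + x t) ^ (k + 1)) := by
    intro t
    rw [hw t, hT t, hint t, hσx t, hC_def]
    have e1 : (1 + x 0 : ℝ) ^ k = Real.exp (k * Real.log (1 + x 0)) := by
      rw [Real.rpow_def_of_pos (h1x 0), mul_comm]
    have e2 : (1 + x t : ℝ) ^ (k + 1) = Real.exp ((k + 1) * Real.log (1 + x t)) := by
      rw [Real.rpow_def_of_pos (h1x t), mul_comm]
    rw [e1, e2]
    have e3 : (1 + x t : ℝ) = Real.exp (Real.log (1 + x t)) :=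
      (Real.exp_log (h1x t)).symm
    nth_rewrite 2 [e3]
    rw [neg_sub, Real.exp_sub]
    have e5 : Real.exp ((k + 1) * Real.log (1 + x t))
        = Real.exp (k * Real.log (1 + x t)) * Real.exp (Real.log (1 + x t)) := by
      rw [← Real.exp_add]; ring_nf
    rw [e5]
    field_simp [Real.exp_ne_zero]
  -- x tstar = 1/k
  have hxstar : x tstar = 1 / k := by
    rw [hx_def]
    simp only
    rw [htstar]
    have : -s * (1 / s * Real.log (-c / b)) = -Real.log k := by
      rw [← mul_assoc, neg_mul, mul_one_div_cancel hs.ne', neg_mul, one_mul, hk_def]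
    rw [this, Real.exp_neg, Real.exp_log hk0, one_div]
  constructor
  · rw [htstar]
    have : (0:ℝ) < Real.log (-c / b) := Real.log_pos hk1
    positivity
  · intro t _
    rw [hW t, hW tstar, hxstar]
    exact mul_le_mul_of_nonneg_left (amgm_key hk1 (hxpos t)) hCpos.le
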